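/- Let d ≥ 1, let M₁, M₂ ⊆ P([d]) be non-empty, and let k₁, k₂ be nonnegative integers. If A is an order-d lattice subset with cov_{M₁}(A) ≤ k₁ and cov_{M₂}(A) ≤ k₂, then cov_{M₁∧M₂}(A) ≤ k₁·k₂, where M₁ ∧ M₂ = {B₁ ∩ B₂ : B₁ ∈ M₁, B₂ ∈ M₂}. -/
import Mathlib


open Finset

/-- A `B`-subspace of `[n₁]×⋯×[n_d]`: the set of points agreeing with some point `u`
on all coordinates outside `B`. -/
def IsBSubspace {d : ℕ} (n : Fin d → ℕ) (B : Finset (Fin d))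
    (S : Set (∀ j, Fin (n j))) : Prop :=
  ∃ u : ∀ j, Fin (n j), S = {x | ∀ j ∉ B, x j = u j}

/-- An `M`-subspace: a `B`-subspace for some `B ∈ M`. -/
def IsMSubspace {d : ℕ} (n : Fin d → ℕ) (M : Finset (Finset (Fin d)))
    (S : Set (∀ j, Fin (n j))) : Prop :=
  ∃ B ∈ M, IsBSubspace n B S

/-- The `M`-covering number: the least `k` such that `A` is covered by `k` `M`-subspaces. -/
noncomputable def covM {d : ℕ} (n : Fin d → ℕ) (M : Finset (Finset (Fin d)))
    (A : Set (∀ j, Fin (n j))) : ℕ :=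
  sInf {k | ∃ S : Fin k → Set (∀ j, Fin (n j)),
    (∀ i, IsMSubspace n M (S i)) ∧ A ⊆ ⋃ i, S i}

/-- Auxiliary: the covering set is nonempty and upward closed, so `covM ≤ k` gives a cover. -/
lemma exists_cover {d : ℕ} (n : Fin d → ℕ) (hn : ∀ j, 0 < n j)
    (M : Finset (Finset (Fin d))) (hM : M.Nonempty) (k : ℕ)
    (A : Set (∀ j, Fin (n j))) (h : covM n M A ≤ k) :
    ∃ S : Fin k → Set (∀ j, Fin (n j)),
      (∀ i, IsMSubspace n M (S i)) ∧ A ⊆ ⋃ i, S i := by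
  obtain ⟨B, hB⟩ := hM
  set u0 : ∀ j, Fin (n j) := fun j => ⟨0, hn j⟩ with hu0
  set D : Set (∀ j, Fin (n j)) := {x | ∀ j ∉ B, x j = u0 j} with hD
  have hDM : IsMSubspace n M D := ⟨B, hB, u0, rfl⟩
  set P : Set ℕ := {k | ∃ S : Fin k → Set (∀ j, Fin (n j)),
    (∀ i, IsMSubspace n M (S i)) ∧ A ⊆ ⋃ i, S i} with hP
  have hne : P.Nonempty := by
    refine ⟨Fintype.card (∀ j, Fin (n j)), ?_⟩
    set e := (Fintype.equivFin (∀ j, Fin (n j))).symm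
    refine ⟨fun i => {x | ∀ j ∉ B, x j = e i j}, fun i => ⟨B, hB, e i, rfl⟩, ?_⟩
    intro a _
    exact Set.mem_iUnion.2 ⟨e.symm a, by simp⟩
  have hmem : covM n M A ∈ P := Nat.sInf_mem hne
  have hstep : ∀ m, m ∈ P → m + 1 ∈ P := by
    rintro m ⟨S, hS, hcov⟩
    refine ⟨fun i => if h : (i : ℕ) < m then S ⟨i, h⟩ else D, fun i => ?_, ?_⟩
    · by_cases h : (i : ℕ) < m <;> simp [h, hS, hDM]
    · intro a ha
      obtain ⟨i, hi⟩ := Set.mem_iUnion.1 (hcov ha)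
      exact Set.mem_iUnion.2 ⟨⟨i, Nat.lt_succ_of_lt i.2⟩, by simpa [i.2] using hi⟩
  have : k ∈ P := by
    refine Nat.le_induction hmem (fun m _ h => hstep m h) k h
  exact this

theorem covM_wedge {d : ℕ} (hd : 0 < d) (n : Fin d → ℕ) (hn : ∀ j, 0 < n j)
    (M₁ M₂ : Finset (Finset (Fin d))) (hM₁ : M₁.Nonempty) (hM₂ : M₂.Nonempty)
    (k₁ k₂ : ℕ) (A : Set (∀ j, Fin (n j)))
    (hA₁ : covM n M₁ A ≤ k₁) (hA₂ : covM n M₂ A ≤ k₂) :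
    covM n ((M₁ ×ˢ M₂).image fun p => p.1 ∩ p.2) A ≤ k₁ * k₂ := by
  obtain ⟨S, hS, hScov⟩ := exists_cover n hn M₁ hM₁ k₁ A hA₁
  obtain ⟨T, hT, hTcov⟩ := exists_cover n hn M₂ hM₂ k₂ A hA₂
  choose B₁ hB₁ u₁ hu₁ using hS
  choose B₂ hB₂ u₂ hu₂ using hT
  set e := finProdFinEquiv (m := k₁) (n := k₂)
  set w : Fin k₁ → Fin k₂ → ∀ j, Fin (n j) :=
    fun i i' j => if j ∈ B₁ i then u₂ i' j else u₁ i j with hw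
  set U : Fin (k₁ * k₂) → Set (∀ j, Fin (n j)) := fun p =>
    {x | ∀ j ∉ B₁ (e.symm p).1 ∩ B₂ (e.symm p).2, x j = w (e.symm p).1 (e.symm p).2 j}
  have hUM : ∀ p, IsMSubspace n ((M₁ ×ˢ M₂).image fun p => p.1 ∩ p.2) (U p) := by
    intro p
    refine ⟨B₁ (e.symm p).1 ∩ B₂ (e.symm p).2, ?_, w (e.symm p).1 (e.symm p).2, rfl⟩
    exact Finset.mem_image.2 ⟨((B₁ (e.symm p).1), (B₂ (e.symm p).2)),
      Finset.mem_product.2 ⟨hB₁ _, hB₂ _⟩, rfl⟩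
  refine Nat.sInf_le ⟨U, hUM, ?_⟩
  intro a ha
  obtain ⟨i, hi⟩ := Set.mem_iUnion.1 (hScov ha)
  obtain ⟨i', hi'⟩ := Set.mem_iUnion.1 (hTcov ha)
  rw [hu₁ i] at hi
  rw [hu₂ i'] at hi'
  refine Set.mem_iUnion.2 ⟨e (i, i'), ?_⟩
  have he : e.symm (e (i, i')) = (i, i') := e.symm_apply_apply _
  simp only [U, Set.mem_setOf_eq, he]
  intro j hj
  rw [Finset.mem_inter, not_and_or] at hj
  by_cases hjB : j ∈ B₁ i
  · have : j ∉ B₂ i' := by tauto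
    simp only [hw, if_pos hjB]
    exact hi' j this
  · simp only [hw, if_neg hjB]
    exact hi j hjB
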